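/- Let V be a finite set and let C₁, …, C_k be subsets of V with C₁ ∪ ⋯ ∪ C_k = V satisfying the running intersection property with separators S_i := C_i ∩ (C₁ ∪ ⋯ ∪ C_{i−1}) for i = 2, …, k. Let Ω be a symmetric positive definite real V×V matrix such that (Ω⁻¹)_{v w} = 0 for every pair of distinct vertices v, w that are not both contained in some C_i. Then det Ω = (∏_{i=1}^{k} det Ω_{C_i}) / (∏_{i=2}^{k} det Ω_{S_i}), where Ω_U denotes the principal sub-matrix indexed by U and det Ω_∅ = 1 by convention. -/

import Mathlib

open Matrix

/-- Principal sub-matrix of `M` indexed by the finset `A`. -/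
def psub {V : Type*} [Fintype V] [DecidableEq V] (M : Matrix V V ℝ) (A : Finset V) :
    Matrix A A ℝ :=
  M.submatrix (fun a => a.1) (fun a => a.1)


open Matrix

section Helpers

variable {V : Type*} [Fintype V] [DecidableEq V]

/-- Equivalence between `↥A ⊕ ↥B` and `V` for a partition `A, B` of `V`. -/
def sumEquivOfCompl {A B : Finset V} (hd : Disjoint A B) (hu : A ∪ B = Finset.univ) :
    (↥A ⊕ ↥B) ≃ V where
  toFun := Sum.elim Subtype.val Subtype.val
  invFun v := if h : v ∈ A then Sum.inl ⟨v, h⟩ else Sum.inr ⟨v, by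
    have hv := Finset.mem_univ v
    rw [← hu, Finset.mem_union] at hv
    exact hv.resolve_left h⟩
  left_inv x := by
    rcases x with a | b
    · exact dif_pos a.2
    · have hnb : (b : V) ∉ A := fun hmem => Finset.disjoint_left.mp hd hmem b.2
      exact dif_neg hnb
  right_inv v := by
    by_cases h : v ∈ A
    · simp only [dif_pos h, Sum.elim_inl]
    · simp only [dif_neg h, Sum.elim_inr]

lemma psub_posDef {Om : Matrix V V ℝ} (hpd : Om.PosDef) (A : Finset V) :
    (psub Om A).PosDef := by
  rw [posDef_iff_dotProduct_mulVec]
  constructor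
  · ext i j
    have := congrFun (congrFun hpd.1 (↑i : V)) (↑j : V)
    simp only [conjTranspose_apply, star_trivial] at this ⊢
    simpa [psub] using this
  · intro x hx
    classical
    set y : V → ℝ := fun v => if h : v ∈ A then x ⟨v, h⟩ else 0 with hy
    have hyx : ∀ a : ↥A, y ↑a = x a := fun a => dif_pos a.2
    have hy0 : y ≠ 0 := by
      obtain ⟨a, ha⟩ := Function.ne_iff.mp hx
      intro h
      apply ha
      rw [← hyx a, h]
      rfl
    have inner : ∀ v : V, ∑ w : V, Om v w * y w = ∑ j : ↥A, Om v ↑j * x j := by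
      intro v
      rw [← Finset.sum_subset (Finset.subset_univ A)
        (f := fun w => Om v w * y w)
        (fun w _ hw => by simp [hy, dif_neg hw]), ← Finset.sum_coe_sort]
      exact Finset.sum_congr rfl fun j _ => by rw [hyx]
    have key : star y ⬝ᵥ Om *ᵥ y = star x ⬝ᵥ (psub Om A) *ᵥ x := by
      simp only [dotProduct, mulVec, Pi.star_apply, star_trivial]
      rw [← Finset.sum_subset (Finset.subset_univ A)
        (f := fun v => y v * ∑ w, Om v w * y w)
        (fun w _ hw => by simp [hy, dif_neg hw]), ← Finset.sum_coe_sort]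
      refine Finset.sum_congr rfl fun i _ => ?_
      rw [hyx, inner ↑i]
      rfl
    rw [← key]
    exact hpd.dotProduct_mulVec_pos hy0

lemma psub_univ_det (Om : Matrix V V ℝ) : (psub Om (Finset.univ : Finset V)).det = Om.det := by
  let e : ↥(Finset.univ : Finset V) ≃ V := Equiv.subtypeUnivEquiv (fun x => Finset.mem_univ x)
  have : psub Om Finset.univ = Om.submatrix e e := rfl
  rw [this, det_submatrix_equiv_self]

lemma psub_subtype_det (Om : Matrix V V ℝ) (A E : Finset V) (hE : E ⊆ A) :
    (psub (psub Om A) (E.subtype (· ∈ A))).det = (psub Om E).det := by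
  classical
  let e : ↥(E.subtype (· ∈ A)) ≃ ↥E :=
    { toFun := fun x => ⟨↑↑x, Finset.mem_subtype.mp x.2⟩
      invFun := fun y => ⟨⟨↑y, hE y.2⟩, Finset.mem_subtype.mpr y.2⟩
      left_inv := fun x => by ext; rfl
      right_inv := fun y => rfl }
  have : psub (psub Om A) (E.subtype (· ∈ A)) = (psub Om E).submatrix e e := rfl
  rw [this, det_submatrix_equiv_self]

end Helpers

section Blocks

variable {α β : Type*} [Fintype α] [Fintype β] [DecidableEq α] [DecidableEq β]

lemma abstract_jacobi (M : Matrix (α ⊕ β) (α ⊕ β) ℝ) (hMK : M * M⁻¹ = 1) :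
    M.det * ((M⁻¹).toBlocks₂₂).det = (M.toBlocks₁₁).det := by
  obtain ⟨K11, K12, K21, K22, hK⟩ :
      ∃ K11 K12 K21 K22, M⁻¹ = fromBlocks K11 K12 K21 K22 :=
    ⟨_, _, _, _, (fromBlocks_toBlocks M⁻¹).symm⟩
  obtain ⟨P, Q, R, S, rfl⟩ : ∃ P Q R S, M = fromBlocks P Q R S :=
    ⟨_, _, _, _, (fromBlocks_toBlocks M).symm⟩
  rw [hK, fromBlocks_multiply, ← fromBlocks_one] at hMK
  have h12 := congrArg Matrix.toBlocks₁₂ hMK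
  have h22 := congrArg Matrix.toBlocks₂₂ hMK
  simp only [toBlocks_fromBlocks₁₂, toBlocks_fromBlocks₂₂] at h12 h22
  have key : fromBlocks P Q R S * fromBlocks 1 K12 0 K22 = fromBlocks P 0 R 1 := by
    rw [fromBlocks_multiply]
    simp only [Matrix.mul_one, Matrix.mul_zero, add_zero]
    rw [h12, h22]
  have hd2 := congrArg Matrix.det key
  rw [det_mul, det_fromBlocks_zero₂₁, det_fromBlocks_zero₁₂, det_one, det_one, one_mul,
    mul_one] at hd2
  rw [hK, toBlocks_fromBlocks₂₂, toBlocks_fromBlocks₁₁]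
  exact hd2

lemma abstract_schur (M : Matrix (α ⊕ β) (α ⊕ β) ℝ) (hMK : M * M⁻¹ = 1)
    (hK22inv : (M⁻¹).toBlocks₂₂ * ((M⁻¹).toBlocks₂₂)⁻¹ = 1)
    (v w : α) (h0 : (M⁻¹).toBlocks₁₁ v w = 0) (hrow : ∀ b, (M⁻¹).toBlocks₁₂ v b = 0) :
    (M.toBlocks₁₁)⁻¹ v w = 0 := by
  obtain ⟨K11, K12, K21, K22, hK⟩ :
      ∃ K11 K12 K21 K22, M⁻¹ = fromBlocks K11 K12 K21 K22 :=
    ⟨_, _, _, _, (fromBlocks_toBlocks M⁻¹).symm⟩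
  obtain ⟨P, Q, R, S, rfl⟩ : ∃ P Q R S, M = fromBlocks P Q R S :=
    ⟨_, _, _, _, (fromBlocks_toBlocks M).symm⟩
  rw [hK, toBlocks_fromBlocks₂₂] at hK22inv
  rw [hK, toBlocks_fromBlocks₁₁] at h0
  simp only [hK, toBlocks_fromBlocks₁₂] at hrow
  rw [toBlocks_fromBlocks₁₁]
  rw [hK, fromBlocks_multiply, ← fromBlocks_one] at hMK
  have h11 := congrArg Matrix.toBlocks₁₁ hMK
  have h12 := congrArg Matrix.toBlocks₁₂ hMK
  simp only [toBlocks_fromBlocks₁₁, toBlocks_fromBlocks₁₂] at h11 h12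
  have hQ : Q = -(P * (K12 * K22⁻¹)) := by
    calc Q = Q * (K22 * K22⁻¹) := by rw [hK22inv, Matrix.mul_one]
    _ = (Q * K22) * K22⁻¹ := by rw [Matrix.mul_assoc]
    _ = (-(P * K12)) * K22⁻¹ := by rw [eq_neg_of_add_eq_zero_right h12]
    _ = -(P * (K12 * K22⁻¹)) := by rw [Matrix.neg_mul, Matrix.mul_assoc]
  have hQK21 : Q * K21 = -(P * (K12 * (K22⁻¹ * K21))) := by
    rw [hQ, Matrix.neg_mul, Matrix.mul_assoc P (K12 * K22⁻¹) K21,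
      Matrix.mul_assoc K12 K22⁻¹ K21]
  have hright : P * (K11 - K12 * (K22⁻¹ * K21)) = 1 := by
    calc P * (K11 - K12 * (K22⁻¹ * K21))
        = P * K11 - P * (K12 * (K22⁻¹ * K21)) := Matrix.mul_sub _ _ _
    _ = P * K11 + Q * K21 := by rw [hQK21, ← sub_eq_add_neg]
    _ = 1 := h11
  have hPinv : P⁻¹ = K11 - K12 * (K22⁻¹ * K21) := inv_eq_right_inv hright
  rw [hPinv, Matrix.sub_apply, h0, Matrix.mul_apply]
  have hz : ∀ b : β, K12 v b * (K22⁻¹ * K21) b w = 0 := fun b => by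
    rw [hrow b, zero_mul]
  rw [Finset.sum_congr rfl (fun b _ => hz b), Finset.sum_const_zero]
  ring

end Blocks

section Blocks2

variable {V : Type*} [Fintype V] [DecidableEq V]

lemma jacobi (Om : Matrix V V ℝ) (h : IsUnit Om.det) {A B : Finset V}
    (hd : Disjoint A B) (hu : A ∪ B = Finset.univ) :
    Om.det * (psub Om⁻¹ B).det = (psub Om A).det := by
  classical
  let e := sumEquivOfCompl hd hu
  let M := Om.submatrix e e
  have hdet : M.det = Om.det := det_submatrix_equiv_self e Om
  have hMinv : M⁻¹ = Om⁻¹.submatrix e e := inv_submatrix_equiv Om e e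
  have hMK : M * M⁻¹ = 1 := mul_nonsing_inv M (by rwa [hdet])
  have habs := abstract_jacobi M hMK
  have e1 : M.toBlocks₁₁ = psub Om A := rfl
  have e2 : (M⁻¹).toBlocks₂₂ = psub Om⁻¹ B := by rw [hMinv]; rfl
  rw [e1, e2, hdet] at habs
  exact habs

/-- Equivalence `↥A ⊕ ↥B ≃ ↥(A ∪ B)` for disjoint finsets. -/
def sumEquivUnion {A B : Finset V} (hd : Disjoint A B) : (↥A ⊕ ↥B) ≃ ↥(A ∪ B) where
  toFun := Sum.elim (fun a : ↥A => (⟨↑a, Finset.mem_union_left _ a.2⟩ : ↥(A ∪ B)))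
    (fun b : ↥B => (⟨↑b, Finset.mem_union_right _ b.2⟩ : ↥(A ∪ B)))
  invFun v := if h : ↑v ∈ A then Sum.inl ⟨↑v, h⟩ else
    Sum.inr ⟨↑v, (Finset.mem_union.mp v.2).resolve_left h⟩
  left_inv x := by
    rcases x with a | b
    · exact dif_pos a.2
    · have hnb : (b : V) ∉ A := fun hmem => Finset.disjoint_left.mp hd hmem b.2
      exact dif_neg hnb
  right_inv v := by
    by_cases h : (v : V) ∈ A
    · simp only [dif_pos h, Sum.elim_inl]
    · simp only [dif_neg h, Sum.elim_inr]

lemma blockdiag_det (K : Matrix V V ℝ) {A B : Finset V} (hd : Disjoint A B)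
    (h12 : ∀ a ∈ A, ∀ b ∈ B, K a b = 0) (h21 : ∀ b ∈ B, ∀ a ∈ A, K b a = 0) :
    (psub K (A ∪ B)).det = (psub K A).det * (psub K B).det := by
  classical
  let e := sumEquivUnion (V := V) hd
  have hsub : (psub K (A ∪ B)).submatrix e e =
      fromBlocks (psub K A) 0 0 (psub K B) := by
    ext i j
    rcases i with a | b <;> rcases j with a' | b'
    · rfl
    · show K ↑a ↑b' = (0 : Matrix (↥A) (↥B) ℝ) a b'
      rw [Matrix.zero_apply]
      exact h12 _ a.2 _ b'.2
    · show K ↑b ↑a' = (0 : Matrix (↥B) (↥A) ℝ) b a'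
      rw [Matrix.zero_apply]
      exact h21 _ b.2 _ a'.2
    · rfl
  have := congrArg Matrix.det hsub
  rw [det_submatrix_equiv_self, det_fromBlocks_zero₂₁] at this
  exact this

lemma inv_psub_entry (Om : Matrix V V ℝ) (hpd : Om.PosDef) {A B : Finset V}
    (hd : Disjoint A B) (hu : A ∪ B = Finset.univ) (v w : ↥A)
    (hvw : Om⁻¹ ↑v ↑w = 0) (hrow : ∀ b ∈ B, Om⁻¹ ↑v b = 0) :
    (psub Om A)⁻¹ v w = 0 := by
  classical
  let e := sumEquivOfCompl hd hu
  let M := Om.submatrix e e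
  have hdet : M.det = Om.det := det_submatrix_equiv_self e Om
  have hMinv : M⁻¹ = Om⁻¹.submatrix e e := inv_submatrix_equiv Om e e
  have hMK : M * M⁻¹ = 1 := mul_nonsing_inv M
    (by rw [hdet]; exact hpd.isUnit.map detMonoidHom)
  have e1 : M.toBlocks₁₁ = psub Om A := rfl
  have e2 : (M⁻¹).toBlocks₂₂ = psub Om⁻¹ B := by rw [hMinv]; rfl
  have hK22inv : (M⁻¹).toBlocks₂₂ * ((M⁻¹).toBlocks₂₂)⁻¹ = 1 := by
    rw [e2]
    exact mul_nonsing_inv _ (isUnit_iff_ne_zero.mpr (ne_of_gt (psub_posDef hpd.inv B).det_pos))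
  have h0 : (M⁻¹).toBlocks₁₁ v w = 0 := by
    have : (M⁻¹).toBlocks₁₁ v w = Om⁻¹ ↑v ↑w := by rw [hMinv]; rfl
    rw [this, hvw]
  have hrow' : ∀ b : ↥B, (M⁻¹).toBlocks₁₂ v b = 0 := fun b => by
    have : (M⁻¹).toBlocks₁₂ v b = Om⁻¹ ↑v ↑b := by rw [hMinv]; rfl
    rw [this]
    exact hrow _ b.2
  have := abstract_schur M hMK hK22inv v w h0 hrow'
  rwa [e1] at this

end Blocks2

section Step

variable {V : Type*} [Fintype V] [DecidableEq V]

lemma inv_entry_symm (Om : Matrix V V ℝ) (hpd : Om.PosDef) (v w : V) :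
    Om⁻¹ v w = Om⁻¹ w v := by
  have := congrFun (congrFun hpd.inv.1 v) w
  simp only [conjTranspose_apply, star_trivial] at this
  exact this.symm

lemma step_det (Om : Matrix V V ℝ) (hpd : Om.PosDef) {A B : Finset V}
    (hu : A ∪ B = Finset.univ) (hz : ∀ v ∈ A \ B, ∀ w ∈ B \ A, Om⁻¹ v w = 0) :
    (psub Om A).det * (psub Om B).det = Om.det * (psub Om (A ∩ B)).det := by
  classical
  have hIsU : IsUnit Om.det := hpd.isUnit.map detMonoidHom
  have hdXY : Disjoint (A \ B) (B \ A) := by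
    rw [Finset.disjoint_left]
    intro v hv hv'
    rw [Finset.mem_sdiff] at hv hv'
    exact hv'.2 hv.1
  have h1 : Om.det * (psub Om⁻¹ (B \ A)).det = (psub Om A).det := by
    refine jacobi Om hIsU Finset.disjoint_sdiff ?_
    rw [Finset.union_sdiff_self_eq_union, hu]
  have h2 : Om.det * (psub Om⁻¹ (A \ B)).det = (psub Om B).det := by
    refine jacobi Om hIsU Finset.disjoint_sdiff ?_
    rw [Finset.union_sdiff_self_eq_union, Finset.union_comm, hu]
  have h3 : Om.det * (psub Om⁻¹ ((A \ B) ∪ (B \ A))).det = (psub Om (A ∩ B)).det := by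
    refine jacobi Om hIsU ?_ ?_
    · rw [Finset.disjoint_left]
      intro v hv hv'
      rw [Finset.mem_inter] at hv
      rw [Finset.mem_union, Finset.mem_sdiff, Finset.mem_sdiff] at hv'
      rcases hv' with h | h
      · exact h.2 hv.2
      · exact h.2 hv.1
    · rw [← hu]
      ext v
      simp only [Finset.mem_union, Finset.mem_inter, Finset.mem_sdiff]
      tauto
  have h4 : (psub Om⁻¹ ((A \ B) ∪ (B \ A))).det =
      (psub Om⁻¹ (A \ B)).det * (psub Om⁻¹ (B \ A)).det := by
    refine blockdiag_det Om⁻¹ hdXY hz ?_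
    intro b hb a ha
    rw [inv_entry_symm Om hpd]
    exact hz a ha b hb
  rw [← h1, ← h2, ← h3, h4]
  ring

end Step

universe u

theorem aux_det : ∀ (k : ℕ) (hk : 0 < k) (V : Type u) [Fintype V] [DecidableEq V]
    (C : Fin k → Finset V),
    Finset.univ.biUnion C = Finset.univ →
    (∀ i : Fin k, (⟨0, hk⟩ : Fin k) < i → ∃ l < i, C i ∩ (Finset.Iio i).biUnion C ⊆ C l) →
    ∀ (Om : Matrix V V ℝ), Om.PosDef →
    (∀ v w : V, v ≠ w → (¬ ∃ i, v ∈ C i ∧ w ∈ C i) → Om⁻¹ v w = 0) →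
    Om.det * ∏ i ∈ Finset.univ.erase (⟨0, hk⟩ : Fin k),
        (psub Om (C i ∩ (Finset.Iio i).biUnion C)).det =
      ∏ i, (psub Om (C i)).det := by
  intro k
  induction k with
  | zero => intro hk; exact absurd hk (lt_irrefl 0)
  | succ k ih =>
    intro hk V instF instD C hcover hRIP Om hpd hzero
    by_cases hk0 : k = 0
    · subst hk0
      have hC0 : C ⟨0, hk⟩ = Finset.univ := by
        ext v
        simp only [Finset.mem_univ, iff_true]
        have hv := Finset.mem_univ v
        rw [← hcover] at hv
        rcases Finset.mem_biUnion.mp hv with ⟨i, _, hvi⟩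
        rwa [show i = (⟨0, hk⟩ : Fin (0 + 1)) from Fin.ext (by omega)] at hvi
      have herase : (Finset.univ.erase (⟨0, hk⟩ : Fin 1)) = ∅ := by
        apply Finset.eq_empty_of_forall_notMem
        intro x hx
        exact (Finset.mem_erase.mp hx).1 (Fin.ext (by omega))
      rw [herase, Finset.prod_empty, mul_one, Fin.prod_univ_one,
        show (0 : Fin (0 + 1)) = ⟨0, hk⟩ from Fin.ext (by omega), hC0, psub_univ_det]
    · have hkpos : 0 < k := Nat.pos_of_ne_zero hk0
      set lst : Fin (k + 1) := Fin.last k with hlst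
      set A : Finset V := Finset.univ.biUnion (fun j : Fin k => C j.castSucc) with hA
      set B : Finset V := C lst with hB
      have hmemA : ∀ (j : Fin k), C j.castSucc ⊆ A := fun j => by
        rw [hA]
        exact Finset.subset_biUnion_of_mem (fun j : Fin k => C j.castSucc) (Finset.mem_univ j)
      have hcase : ∀ i : Fin (k + 1), i = lst ∨ ∃ j : Fin k, i = j.castSucc := by
        intro i
        by_cases h : (i : ℕ) = k
        · left; exact Fin.ext h
        · right; exact ⟨⟨i, Nat.lt_of_le_of_ne (Nat.lt_succ_iff.mp i.2) h⟩, Fin.ext rfl⟩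
      have hAeq : (Finset.Iio lst).biUnion C = A := by
        rw [hA]
        ext v
        simp only [Finset.mem_biUnion, Finset.mem_Iio, Finset.mem_univ, true_and]
        constructor
        · rintro ⟨i, hi, hvi⟩
          have hik : (i : ℕ) < k := by rw [Fin.lt_def] at hi; simpa [hlst] using hi
          exact ⟨⟨i, hik⟩, by rwa [show Fin.castSucc ⟨i, hik⟩ = i from Fin.ext rfl]⟩
        · rintro ⟨j, hvj⟩
          exact ⟨j.castSucc, Fin.castSucc_lt_last j, hvj⟩
      have hunion : A ∪ B = Finset.univ := by
        ext v
        simp only [Finset.mem_union, Finset.mem_univ, iff_true]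
        have hv := Finset.mem_univ v
        rw [← hcover] at hv
        rcases Finset.mem_biUnion.mp hv with ⟨i, _, hvi⟩
        rcases hcase i with rfl | ⟨j, rfl⟩
        · right; rwa [hB]
        · left; exact hmemA j hvi
      -- RIP at the last clique
      have h0lt : (⟨0, hk⟩ : Fin (k + 1)) < lst := by
        rw [Fin.lt_def]; simpa [hlst] using hkpos
      obtain ⟨l, hl, hSl⟩ := hRIP lst h0lt
      have hlk : (l : ℕ) < k := by rw [Fin.lt_def] at hl; simpa [hlst] using hl
      set l0 : Fin k := ⟨l, hlk⟩ with hl0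
      have hlcast : l = l0.castSucc := Fin.ext rfl
      have hSsub : B ∩ A ⊆ C l0.castSucc := by
        rw [hAeq, ← hB, hlcast] at hSl
        exact hSl
      have hjoint : ∀ v w : V, v ∈ A → w ∈ A → (∃ i, v ∈ C i ∧ w ∈ C i) →
          ∃ j : Fin k, v ∈ C j.castSucc ∧ w ∈ C j.castSucc := by
        rintro v w hvA hwA ⟨i, hvi, hwi⟩
        rcases hcase i with rfl | ⟨j, rfl⟩
        · exact ⟨l0, hSsub (Finset.mem_inter.mpr ⟨by rwa [hB], hvA⟩),
            hSsub (Finset.mem_inter.mpr ⟨by rwa [hB], hwA⟩)⟩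
        · exact ⟨j, hvi, hwi⟩
      have hzA : ∀ v ∈ A \ B, ∀ w ∈ B \ A, Om⁻¹ v w = 0 := by
        intro v hv w hw
        rw [Finset.mem_sdiff] at hv hw
        refine hzero v w (fun h => hw.2 (h ▸ hv.1)) ?_
        rintro ⟨i, hvi, hwi⟩
        rcases hcase i with rfl | ⟨j, rfl⟩
        · exact hv.2 (by rwa [hB])
        · exact hw.2 (hmemA j hwi)
      have hstep := step_det Om hpd hunion hzA
      -- the sub-problem
      set C' : Fin k → Finset ↥A := fun j => (C j.castSucc).subtype (· ∈ A) with hC'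
      have hcover' : Finset.univ.biUnion C' = Finset.univ := by
        ext a
        simp only [Finset.mem_univ, iff_true, Finset.mem_biUnion]
        rcases Finset.mem_biUnion.mp a.2 with ⟨j, -, hj⟩
        exact ⟨j, by simp, by simp only [hC', Finset.mem_subtype]; exact hj⟩
      have hSepEq : ∀ j : Fin k, (C' j ∩ (Finset.Iio j).biUnion C') =
          ((C j.castSucc ∩ (Finset.Iio (Fin.castSucc j)).biUnion C).subtype (· ∈ A)) := by
        intro j
        ext a
        simp only [hC', Finset.mem_inter, Finset.mem_subtype, Finset.mem_biUnion,
          Finset.mem_Iio]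
        constructor
        · rintro ⟨h1, m, hm, hx⟩
          exact ⟨h1, m.castSucc, Fin.castSucc_lt_castSucc_iff.mpr hm, hx⟩
        · rintro ⟨h1, i, hij, hvi⟩
          have h1' : (i : ℕ) < (j : ℕ) := by rw [Fin.lt_def] at hij; simpa using hij
          have h2 : (i : ℕ) < k := lt_trans h1' j.2
          refine ⟨h1, ⟨i, h2⟩, by rw [Fin.lt_def]; exact h1', ?_⟩
          rwa [show Fin.castSucc ⟨i, h2⟩ = i from Fin.ext rfl]
      have hRIP' : ∀ j : Fin k, (⟨0, hkpos⟩ : Fin k) < j →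
          ∃ l' < j, C' j ∩ (Finset.Iio j).biUnion C' ⊆ C' l' := by
        intro j hj
        obtain ⟨m, hm, hsub⟩ := hRIP j.castSucc (by rw [Fin.lt_def] at hj ⊢; simpa using hj)
        have hmk : (m : ℕ) < k := by
          rw [Fin.lt_def] at hm
          exact lt_trans (by simpa using hm) j.2
        refine ⟨⟨m, hmk⟩, by rw [Fin.lt_def]; rw [Fin.lt_def] at hm; simpa using hm, ?_⟩
        intro a ha
        rw [hSepEq j] at ha
        have ha' := Finset.mem_subtype.mp ha
        have : ↑a ∈ C m := hsub ha'
        simp only [hC', Finset.mem_subtype]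
        rwa [show Fin.castSucc ⟨m, hmk⟩ = m from Fin.ext rfl]
      have hdisj : Disjoint A (B \ A) := Finset.disjoint_sdiff
      have hu' : A ∪ (B \ A) = Finset.univ := by
        rw [Finset.union_sdiff_self_eq_union, hunion]
      have hzero' : ∀ a b : ↥A, a ≠ b → (¬ ∃ j, a ∈ C' j ∧ b ∈ C' j) →
          (psub Om A)⁻¹ a b = 0 := by
        intro a b hab hnj
        have habV : (a : V) ≠ b := fun h => hab (Subtype.ext h)
        have hnjV : ¬ ∃ i, ↑a ∈ C i ∧ ↑b ∈ C i := by
          rintro hex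
          rcases hjoint ↑a ↑b a.2 b.2 hex with ⟨j, hja, hjb⟩
          exact hnj ⟨j, by simp only [hC', Finset.mem_subtype]; exact hja,
            by simp only [hC', Finset.mem_subtype]; exact hjb⟩
        have hK0 : Om⁻¹ ↑a ↑b = 0 := hzero _ _ habV hnjV
        have hrowgen : ∀ u : ↥A, (u : V) ∉ B → ∀ y ∈ B \ A, Om⁻¹ ↑u y = 0 := by
          intro u hu y hy
          rw [Finset.mem_sdiff] at hy
          refine hzero _ _ (fun h => hy.2 (h ▸ u.2)) ?_
          rintro ⟨i, hui, hyi⟩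
          rcases hcase i with rfl | ⟨j, rfl⟩
          · exact hu (by rwa [hB])
          · exact hy.2 (hmemA j hyi)
        have hcases : ((a : V) ∉ B) ∨ ((b : V) ∉ B) := by
          by_contra h
          push_neg at h
          exact hnjV ⟨l0.castSucc,
            hSsub (Finset.mem_inter.mpr ⟨h.1, a.2⟩),
            hSsub (Finset.mem_inter.mpr ⟨h.2, b.2⟩)⟩
        rcases hcases with hnB | hnB
        · exact inv_psub_entry Om hpd hdisj hu' a b hK0 (hrowgen a hnB)
        · rw [inv_entry_symm _ (psub_posDef hpd A) a b]
          exact inv_psub_entry Om hpd hdisj hu' b a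
            (by rw [inv_entry_symm Om hpd]; exact hK0) (hrowgen b hnB)
      have IH := ih hkpos ↥A C' hcover' hRIP' (psub Om A) (psub_posDef hpd A) hzero'
      -- convert determinants
      have hdetC : ∀ j : Fin k, (psub (psub Om A) (C' j)).det =
          (psub Om (C j.castSucc)).det := by
        intro j
        rw [hC']
        exact psub_subtype_det Om A (C j.castSucc) (hmemA j)
      have hdetS : ∀ j : Fin k,
          (psub (psub Om A) (C' j ∩ (Finset.Iio j).biUnion C')).det =
          (psub Om (C j.castSucc ∩ (Finset.Iio (Fin.castSucc j)).biUnion C)).det := by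
        intro j
        rw [hSepEq j]
        exact psub_subtype_det Om A _ ((Finset.inter_subset_left).trans (hmemA j))
      -- products
      have hprodC : ∏ i, (psub Om (C i)).det =
          (∏ j : Fin k, (psub Om (C j.castSucc)).det) * (psub Om B).det := by
        rw [hB]
        exact Fin.prod_univ_castSucc _
      have herase : Finset.univ.erase (⟨0, hk⟩ : Fin (k + 1)) =
          insert lst ((Finset.univ.erase (⟨0, hkpos⟩ : Fin k)).image Fin.castSucc) := by
        ext i
        simp only [Finset.mem_erase, Finset.mem_univ, and_true, Finset.mem_insert,
          Finset.mem_image]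
        constructor
        · intro hi
          rcases hcase i with rfl | ⟨j, rfl⟩
          · left; rfl
          · right
            refine ⟨j, ?_, rfl⟩
            intro hj0
            exact hi (by rw [hj0]; exact Fin.ext rfl)
        · rintro (rfl | ⟨j, hj, rfl⟩)
          · intro h
            have := congrArg Fin.val h
            simp only [hlst, Fin.val_last] at this
            omega
          · intro h
            have := congrArg Fin.val h
            simp only [Fin.coe_castSucc] at this
            apply hj
            apply Fin.ext
            simpa using this
      have hlstnotmem : lst ∉ (Finset.univ.erase (⟨0, hkpos⟩ : Fin k)).image Fin.castSucc := by
        simp only [Finset.mem_image]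
        rintro ⟨j, _, hj⟩
        exact (Fin.castSucc_lt_last j).ne hj
      have hprodS : ∏ i ∈ Finset.univ.erase (⟨0, hk⟩ : Fin (k + 1)),
          (psub Om (C i ∩ (Finset.Iio i).biUnion C)).det =
          (psub Om (C lst ∩ (Finset.Iio lst).biUnion C)).det *
          ∏ j ∈ Finset.univ.erase (⟨0, hkpos⟩ : Fin k),
            (psub Om (C j.castSucc ∩ (Finset.Iio (Fin.castSucc j)).biUnion C)).det := by
        rw [herase, Finset.prod_insert hlstnotmem, Finset.prod_image
          (fun x _ y _ h => Fin.castSucc_injective k h)]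
      have hglst : C lst ∩ (Finset.Iio lst).biUnion C = B ∩ A := by
        rw [hAeq, hB]
      rw [hprodS, hprodC, hglst]
      have IH' : (psub Om A).det * ∏ j ∈ Finset.univ.erase (⟨0, hkpos⟩ : Fin k),
          (psub Om (C j.castSucc ∩ (Finset.Iio (Fin.castSucc j)).biUnion C)).det =
          ∏ j : Fin k, (psub Om (C j.castSucc)).det := by
        rw [← Finset.prod_congr rfl (fun j _ => hdetS j),
          ← Finset.prod_congr rfl (fun j _ => hdetC j)]
        exact IH
      have hstep2 : Om.det * (psub Om (B ∩ A)).det = (psub Om A).det * (psub Om B).det := by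
        rw [Finset.inter_comm]
        exact hstep.symm
      calc Om.det * ((psub Om (B ∩ A)).det *
            ∏ j ∈ Finset.univ.erase (⟨0, hkpos⟩ : Fin k),
              (psub Om (C j.castSucc ∩ (Finset.Iio (Fin.castSucc j)).biUnion C)).det)
          = (Om.det * (psub Om (B ∩ A)).det) *
            ∏ j ∈ Finset.univ.erase (⟨0, hkpos⟩ : Fin k),
              (psub Om (C j.castSucc ∩ (Finset.Iio (Fin.castSucc j)).biUnion C)).det := by
            ring
        _ = ((psub Om A).det * (psub Om B).det) *
            ∏ j ∈ Finset.univ.erase (⟨0, hkpos⟩ : Fin k),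
              (psub Om (C j.castSucc ∩ (Finset.Iio (Fin.castSucc j)).biUnion C)).det := by
            rw [hstep2]
        _ = ((psub Om A).det *
            ∏ j ∈ Finset.univ.erase (⟨0, hkpos⟩ : Fin k),
              (psub Om (C j.castSucc ∩ (Finset.Iio (Fin.castSucc j)).biUnion C)).det) *
            (psub Om B).det := by ring
        _ = (∏ j : Fin k, (psub Om (C j.castSucc)).det) * (psub Om B).det := by rw [IH']


/-- If `C₁, …, C_k` cover `V` and satisfy the running intersection property with
separators `S_i = C_i ∩ (C₁ ∪ ⋯ ∪ C_{i−1})`, and `Ω` is a symmetric positive definite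
matrix whose inverse vanishes at every pair of distinct vertices not jointly contained
in some `C_i`, then `det Ω = (∏ᵢ det Ω_{C_i}) / (∏_{i≥2} det Ω_{S_i})`
(with `det Ω_∅ = 1`, which is automatic for a matrix indexed by the empty type). -/
theorem stmt_1 {V : Type*} [Fintype V] [DecidableEq V]
    (k : ℕ) (hk : 0 < k) (C : Fin k → Finset V)
    (hcover : Finset.univ.biUnion C = Finset.univ)
    (Sep : Fin k → Finset V)
    (hSep : ∀ i, Sep i = C i ∩ (Finset.Iio i).biUnion C)
    (hRIP : ∀ i : Fin k, (⟨0, hk⟩ : Fin k) < i → ∃ l < i, Sep i ⊆ C l)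
    (Om : Matrix V V ℝ) (hsym : Om.IsSymm) (hpd : Om.PosDef)
    (hzero : ∀ v w : V, v ≠ w → (¬ ∃ i, v ∈ C i ∧ w ∈ C i) → Om⁻¹ v w = 0) :
    Om.det =
      (∏ i, (psub Om (C i)).det) /
        ∏ i ∈ Finset.univ.erase (⟨0, hk⟩ : Fin k), (psub Om (Sep i)).det := by
  have hSpos : 0 < ∏ i ∈ Finset.univ.erase (⟨0, hk⟩ : Fin k), (psub Om (Sep i)).det :=
    Finset.prod_pos fun i _ => (psub_posDef hpd (Sep i)).det_pos
  rw [eq_div_iff (ne_of_gt hSpos)]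
  have hRIP' : ∀ i : Fin k, (⟨0, hk⟩ : Fin k) < i →
      ∃ l < i, C i ∩ (Finset.Iio i).biUnion C ⊆ C l := by
    intro i hi
    obtain ⟨l, hl, h⟩ := hRIP i hi
    rw [hSep i] at h
    exact ⟨l, hl, h⟩
  have haux := aux_det k hk V C hcover hRIP' Om hpd hzero
  rw [← haux, Finset.prod_congr rfl (fun i _ => by rw [hSep i])]
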